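/- Let x₁, y₁, …, x_δ, y_δ be 2δ pairwise distinct complex numbers (δ ≥ 1). Let q₁, …, q_s be distinct complex numbers, each distinct from every x_k and y_k, let m₁, …, m_s be positive integers with n = m₁ + ⋯ + m_s, and set Q(z) = ∏_{i=1}^{s} (z − q_i)^{m_i}. Define the ℂ-vector space V_D = { P ∈ ℂ[z] : deg P ≤ n and P(x_k)·Q(y_k) = P(y_k)·Q(x_k) for all k = 1, …, δ }, and define Ω_{−D} = { c ∈ ℂ^δ : Q divides the polynomial N_c(z) = Σ_{k=1}^{δ} c_k (y_k − x_k) ∏_{l ≠ k} (z − x_l)(z − y_l) }. Then dim_ℂ V_D = n + 1 − δ + dim_ℂ Ω_{−D}. (This is the genus-zero case of the paper's Riemann–Roch theorem for the singular surface Σ: dim |D|_Σ = n − g − δ + dim Ω_{−D}(Σ).) -/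

import Mathlib

open Polynomial


/-- The polynomial `(y k − x k) · ∏_{l ≠ k} (z − x l)(z − y l)` appearing in the
numerator `N_c` of the `Σ`-holomorphic form `ω_c`. -/
noncomputable def nodalFormNumBasis (δ : ℕ) (x y : Fin δ → ℂ) (k : Fin δ) :
    Polynomial ℂ :=
  C (y k - x k) * ∏ l ∈ Finset.univ.erase k, ((X - C (x l)) * (X - C (y l)))

/-- The linear map `c ↦ N_c(z) = ∑ k c k (y k − x k) ∏_{l ≠ k} (z − x l)(z − y l)`. -/
noncomputable def nodalFormNum (δ : ℕ) (x y : Fin δ → ℂ) :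
    (Fin δ → ℂ) →ₗ[ℂ] Polynomial ℂ :=
  ∑ k, (LinearMap.proj k).smulRight (nodalFormNumBasis δ x y k)

/-- The space `V_D` of polynomials `P` with `deg P ≤ N` satisfying the node conditions
`P(x k)·Q(y k) = P(y k)·Q(x k)` for all `k` (i.e. `P/Q` descends to the nodal curve). -/
noncomputable def VD (N δ : ℕ) (x y : Fin δ → ℂ) (Q : Polynomial ℂ) :
    Submodule ℂ (Polynomial ℂ) :=
  Polynomial.degreeLE ℂ (N : WithBot ℕ) ⊓
    ⨅ k : Fin δ, LinearMap.ker
      (Q.eval (y k) • Polynomial.leval (x k) - Q.eval (x k) • Polynomial.leval (y k))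

/-- The space `Ω_{−D}` of coefficient vectors `c ∈ ℂ^δ` such that `Q` divides `N_c`,
i.e. of `Σ`-holomorphic forms vanishing on `D`. -/
noncomputable def OmegaD (δ : ℕ) (x y : Fin δ → ℂ) (Q : Polynomial ℂ) :
    Submodule ℂ (Fin δ → ℂ) :=
  Submodule.comap (nodalFormNum δ x y) ((Ideal.span {Q}).restrictScalars ℂ)


section Aux

open Finset


lemma coeff_card_sub_one_eq_sum_eval {ι : Type*} [Fintype ι] [DecidableEq ι]
    (v : ι → ℂ) (hv : Function.Injective v) (f : Polynomial ℂ)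
    (hf : f.degree < (Fintype.card ι : ℕ)) :
    f.coeff (Fintype.card ι - 1) =
      ∑ i, f.eval (v i) * Lagrange.nodalWeight Finset.univ v i := by
  have hcard : #(Finset.univ : Finset ι) = Fintype.card ι := rfl
  have h := Lagrange.eq_interpolate (s := Finset.univ) (v := v) (f := f) hv.injOn
    (by rwa [hcard])
  conv_lhs => rw [h]
  rw [Lagrange.interpolate_apply, finset_sum_coeff]
  refine Finset.sum_congr rfl fun i _ => ?_
  rw [coeff_C_mul]
  congr 1
  have hb : Lagrange.basis Finset.univ v i
      = C (Lagrange.nodalWeight Finset.univ v i) * Lagrange.nodal (Finset.univ.erase i) v := by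
    rw [Lagrange.basis_eq_prod_sub_inv_mul_nodal_div (Finset.mem_univ i),
      ← Lagrange.nodal_erase_eq_nodal_div (Finset.mem_univ i)]
  rw [hb, coeff_C_mul]
  have hdeg : (Lagrange.nodal (Finset.univ.erase i) v).natDegree = Fintype.card ι - 1 := by
    rw [Lagrange.natDegree_nodal, Finset.card_erase_of_mem (Finset.mem_univ i), hcard]
  rw [← hdeg, Monic.coeff_natDegree Lagrange.nodal_monic, mul_one]

lemma degree_lt_of_natDegree_lt {p : Polynomial ℂ} {n : ℕ} (h : p.natDegree < n) :
    p.degree < (n : WithBot ℕ) :=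
  lt_of_le_of_lt degree_le_natDegree (by exact_mod_cast h)

variable {δ : ℕ} {x y : Fin δ → ℂ}


lemma nodalFormNum_apply (c : Fin δ → ℂ) :
    (nodalFormNum δ x y) c = ∑ k, c k • nodalFormNumBasis δ x y k := by
  simp [nodalFormNum, LinearMap.sum_apply, LinearMap.smulRight_apply, LinearMap.proj_apply]

lemma natDegree_nodalFormNumBasis_le (k : Fin δ) :
    (nodalFormNumBasis δ x y k).natDegree ≤ 2 * δ - 2 := by
  refine le_trans (natDegree_mul_le) ?_
  rw [natDegree_C, zero_add]
  refine le_trans (natDegree_prod_le _ _) ?_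
  have : ∀ l ∈ Finset.univ.erase k, ((X - C (x l)) * (X - C (y l))).natDegree ≤ 2 := by
    intro l _
    refine le_trans natDegree_mul_le ?_
    simp [natDegree_X_sub_C]
  refine le_trans (Finset.sum_le_card_nsmul _ _ 2 this) ?_
  rw [Finset.card_erase_of_mem (Finset.mem_univ k), smul_eq_mul]
  have h1 : #(Finset.univ : Finset (Fin δ)) = δ := Finset.card_univ.trans (Fintype.card_fin δ)
  have := k.2
  omega

lemma natDegree_nodalFormNum_le (c : Fin δ → ℂ) :
    ((nodalFormNum δ x y) c).natDegree ≤ 2 * δ - 2 := by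
  rw [nodalFormNum_apply]
  refine natDegree_sum_le_of_forall_le _ _ fun k _ => ?_
  exact le_trans (natDegree_smul_le _ _) (natDegree_nodalFormNumBasis_le k)

lemma erase_inl (j : Fin δ) :
    (Finset.univ : Finset (Fin δ ⊕ Fin δ)).erase (Sum.inl j)
      = (Finset.univ.erase j).disjSum Finset.univ := by
  ext i
  cases i <;> simp

lemma erase_inr (j : Fin δ) :
    (Finset.univ : Finset (Fin δ ⊕ Fin δ)).erase (Sum.inr j)
      = (Finset.univ : Finset (Fin δ)).disjSum (Finset.univ.erase j) := by
  ext i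
  cases i <;> simp

/-- evaluation of `N_c` at the node `x j`. -/
lemma eval_nodalFormNum_left (hx : Function.Injective x) (c : Fin δ → ℂ) (j : Fin δ) :
    ((nodalFormNum δ x y) c).eval (x j)
      = c j * ((y j - x j) * ∏ l ∈ Finset.univ.erase j, ((x j - x l) * (x j - y l))) := by
  rw [nodalFormNum_apply, eval_finset_sum]
  rw [Finset.sum_eq_single j]
  · simp only [eval_smul, smul_eq_mul, nodalFormNumBasis, eval_mul, eval_C, eval_prod,
      eval_sub, eval_X]
  · intro k _ hkj
    have hj : j ∈ Finset.univ.erase k := Finset.mem_erase.2 ⟨Ne.symm hkj, Finset.mem_univ j⟩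
    simp only [eval_smul, smul_eq_mul, nodalFormNumBasis, eval_mul, eval_C, eval_prod,
      eval_sub, eval_X]
    rw [Finset.prod_eq_zero hj (by simp)]
    ring
  · exact fun h => absurd (Finset.mem_univ j) h


lemma eval_nodalFormNum_right (c : Fin δ → ℂ) (j : Fin δ) :
    ((nodalFormNum δ x y) c).eval (y j)
      = c j * ((y j - x j) * ∏ l ∈ Finset.univ.erase j, ((y j - x l) * (y j - y l))) := by
  rw [nodalFormNum_apply, eval_finset_sum]
  rw [Finset.sum_eq_single j]
  · simp only [eval_smul, smul_eq_mul, nodalFormNumBasis, eval_mul, eval_C, eval_prod,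
      eval_sub, eval_X]
  · intro k _ hkj
    have hj : j ∈ Finset.univ.erase k := Finset.mem_erase.2 ⟨Ne.symm hkj, Finset.mem_univ j⟩
    simp only [eval_smul, smul_eq_mul, nodalFormNumBasis, eval_mul, eval_C, eval_prod,
      eval_sub, eval_X]
    rw [Finset.prod_eq_zero hj (by simp)]
    ring
  · exact fun h => absurd (Finset.mem_univ j) h

lemma eval_nodalFormNum_mul_weight (hdist : Function.Injective (Sum.elim x y))
    (c : Fin δ → ℂ) (i : Fin δ ⊕ Fin δ) :
    ((nodalFormNum δ x y) c).eval (Sum.elim x y i) *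
      Lagrange.nodalWeight Finset.univ (Sum.elim x y) i = Sum.elim (fun k => -c k) c i := by
  have hxinj : Function.Injective x := fun a b h => by
    simpa using hdist (a₁ := Sum.inl a) (a₂ := Sum.inl b) (by simpa using h)
  have hyinj : Function.Injective y := fun a b h => by
    simpa using hdist (a₁ := Sum.inr a) (a₂ := Sum.inr b) (by simpa using h)
  have hxy : ∀ a b, x a ≠ y b := fun a b h => by
    have := hdist (a₁ := Sum.inl a) (a₂ := Sum.inr b) (by simpa using h)
    simp at this
  cases i with
  | inl j =>
    have hw : Lagrange.nodalWeight Finset.univ (Sum.elim x y) (Sum.inl j)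
        = ((∏ l ∈ Finset.univ.erase j, (x j - x l))
            * ((x j - y j) * ∏ l ∈ Finset.univ.erase j, (x j - y l)))⁻¹ := by
      rw [Lagrange.nodalWeight, erase_inl, Finset.prod_disjSum]
      simp only [Sum.elim_inl, Sum.elim_inr]
      rw [Finset.prod_inv_distrib, Finset.prod_inv_distrib, ← mul_inv,
        ← Finset.mul_prod_erase _ _ (Finset.mem_univ j)]
    have ha : (∏ l ∈ Finset.univ.erase j, (x j - x l)) ≠ 0 :=
      Finset.prod_ne_zero_iff.2 fun l hl =>
        sub_ne_zero.2 fun h => (Finset.mem_erase.1 hl).1 (hxinj h).symm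
    have hb : (∏ l ∈ Finset.univ.erase j, (x j - y l)) ≠ 0 :=
      Finset.prod_ne_zero_iff.2 fun l _ => sub_ne_zero.2 (hxy j l)
    have hc : x j - y j ≠ 0 := sub_ne_zero.2 (hxy j j)
    simp only [Sum.elim_inl]
    rw [eval_nodalFormNum_left hxinj c j, hw, Finset.prod_mul_distrib]
    field_simp
    ring
  | inr j =>
    have hw : Lagrange.nodalWeight Finset.univ (Sum.elim x y) (Sum.inr j)
        = (((y j - x j) * ∏ l ∈ Finset.univ.erase j, (y j - x l))
            * ∏ l ∈ Finset.univ.erase j, (y j - y l))⁻¹ := by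
      rw [Lagrange.nodalWeight, erase_inr, Finset.prod_disjSum]
      simp only [Sum.elim_inl, Sum.elim_inr]
      rw [Finset.prod_inv_distrib, Finset.prod_inv_distrib, ← mul_inv,
        ← Finset.mul_prod_erase _ _ (Finset.mem_univ j)]
    have ha : (∏ l ∈ Finset.univ.erase j, (y j - y l)) ≠ 0 :=
      Finset.prod_ne_zero_iff.2 fun l hl =>
        sub_ne_zero.2 fun h => (Finset.mem_erase.1 hl).1 (hyinj h).symm
    have hb : (∏ l ∈ Finset.univ.erase j, (y j - x l)) ≠ 0 :=
      Finset.prod_ne_zero_iff.2 fun l _ => sub_ne_zero.2 (Ne.symm (hxy l j))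
    have hc : y j - x j ≠ 0 := sub_ne_zero.2 (Ne.symm (hxy j j))
    simp only [Sum.elim_inr]
    rw [eval_nodalFormNum_right c j, hw, Finset.prod_mul_distrib]
    field_simp


lemma bridge (hdist : Function.Injective (Sum.elim x y))
    {Q : Polynomial ℂ} (hQnode : ∀ i : Fin δ ⊕ Fin δ, Q.eval (Sum.elim x y i) ≠ 0)
    (c : Fin δ → ℂ) (j : ℕ) :
    ∑ k, (Q.eval (x k) * Q.eval (y k))⁻¹ * c k *
        (Q.eval (y k) * x k ^ j - Q.eval (x k) * y k ^ j)
      = -∑ i : Fin δ ⊕ Fin δ,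
          (((nodalFormNum δ x y) c).eval (Sum.elim x y i) / Q.eval (Sum.elim x y i))
            * (Sum.elim x y i) ^ j
            * Lagrange.nodalWeight Finset.univ (Sum.elim x y) i := by
  have hQx : ∀ k, Q.eval (x k) ≠ 0 := fun k => hQnode (Sum.inl k)
  have hQy : ∀ k, Q.eval (y k) ≠ 0 := fun k => hQnode (Sum.inr k)
  have hterm : ∀ k, (Q.eval (x k) * Q.eval (y k))⁻¹ * c k *
        (Q.eval (y k) * x k ^ j - Q.eval (x k) * y k ^ j)
      = c k * x k ^ j * (Q.eval (x k))⁻¹ - c k * y k ^ j * (Q.eval (y k))⁻¹ := by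
    intro k
    have h1 : (Q.eval (y k))⁻¹ * Q.eval (y k) = 1 := inv_mul_cancel₀ (hQy k)
    have h2 : (Q.eval (x k))⁻¹ * Q.eval (x k) = 1 := inv_mul_cancel₀ (hQx k)
    calc (Q.eval (x k) * Q.eval (y k))⁻¹ * c k *
        (Q.eval (y k) * x k ^ j - Q.eval (x k) * y k ^ j)
        = ((Q.eval (y k))⁻¹ * Q.eval (y k)) * (c k * x k ^ j * (Q.eval (x k))⁻¹)
          - ((Q.eval (x k))⁻¹ * Q.eval (x k)) * (c k * y k ^ j * (Q.eval (y k))⁻¹) := by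
          rw [mul_inv]; ring
      _ = c k * x k ^ j * (Q.eval (x k))⁻¹ - c k * y k ^ j * (Q.eval (y k))⁻¹ := by
          rw [h1, h2, one_mul, one_mul]
  have hL : ∀ k, ((nodalFormNum δ x y) c).eval (Sum.elim x y (Sum.inl k))
        / Q.eval (Sum.elim x y (Sum.inl k)) * (Sum.elim x y (Sum.inl k)) ^ j
        * Lagrange.nodalWeight Finset.univ (Sum.elim x y) (Sum.inl k)
      = -(c k * x k ^ j * (Q.eval (x k))⁻¹) := by
    intro k
    have h := eval_nodalFormNum_mul_weight hdist c (Sum.inl k)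
    simp only [Sum.elim_inl] at h ⊢
    rw [div_eq_mul_inv,
      show ((nodalFormNum δ x y) c).eval (x k) * (Q.eval (x k))⁻¹ * x k ^ j
          * Lagrange.nodalWeight Finset.univ (Sum.elim x y) (Sum.inl k)
        = ((nodalFormNum δ x y) c).eval (x k)
            * Lagrange.nodalWeight Finset.univ (Sum.elim x y) (Sum.inl k)
            * x k ^ j * (Q.eval (x k))⁻¹ from by ring, h]
    ring
  have hR : ∀ k, ((nodalFormNum δ x y) c).eval (Sum.elim x y (Sum.inr k))
        / Q.eval (Sum.elim x y (Sum.inr k)) * (Sum.elim x y (Sum.inr k)) ^ j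
        * Lagrange.nodalWeight Finset.univ (Sum.elim x y) (Sum.inr k)
      = c k * y k ^ j * (Q.eval (y k))⁻¹ := by
    intro k
    have h := eval_nodalFormNum_mul_weight hdist c (Sum.inr k)
    simp only [Sum.elim_inr] at h ⊢
    rw [div_eq_mul_inv,
      show ((nodalFormNum δ x y) c).eval (y k) * (Q.eval (y k))⁻¹ * y k ^ j
          * Lagrange.nodalWeight Finset.univ (Sum.elim x y) (Sum.inr k)
        = ((nodalFormNum δ x y) c).eval (y k)
            * Lagrange.nodalWeight Finset.univ (Sum.elim x y) (Sum.inr k)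
            * y k ^ j * (Q.eval (y k))⁻¹ from by ring, h]
  rw [Fintype.sum_sum_type]
  simp only [hterm, hL, hR, Finset.sum_sub_distrib, Finset.sum_neg_distrib]
  ring

lemma key_dvd_iff (hδ : 1 ≤ δ) (hdist : Function.Injective (Sum.elim x y))
    {N : ℕ} {Q : Polynomial ℂ} (hQm : Q.Monic) (hQdeg : Q.natDegree = N)
    (hQx : ∀ k, Q.eval (x k) ≠ 0) (hQy : ∀ k, Q.eval (y k) ≠ 0)
    (c : Fin δ → ℂ) :
    Q ∣ (nodalFormNum δ x y) c ↔
      ∀ j : Fin (N+1), ∑ k, (Q.eval (x k) * Q.eval (y k))⁻¹ * c k *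
        (Q.eval (y k) * x k ^ (j : ℕ) - Q.eval (x k) * y k ^ (j : ℕ)) = 0 := by
  classical
  have hQnode : ∀ i : Fin δ ⊕ Fin δ, Q.eval (Sum.elim x y i) ≠ 0 := by
    intro i; cases i; exacts [hQx _, hQy _]
  have hcard : Fintype.card (Fin δ ⊕ Fin δ) = 2 * δ := by
    rw [Fintype.card_sum, Fintype.card_fin]; omega
  have hucard : #(Finset.univ : Finset (Fin δ ⊕ Fin δ)) = 2 * δ := by
    rw [Finset.card_univ, hcard]
  constructor
  · rintro ⟨S, hS⟩ j
    have hj : (j : ℕ) ≤ N := Fin.is_le j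
    rw [bridge hdist hQnode c (j : ℕ), neg_eq_zero]
    have hsum : ∀ i : Fin δ ⊕ Fin δ,
        ((nodalFormNum δ x y) c).eval (Sum.elim x y i) / Q.eval (Sum.elim x y i)
          * (Sum.elim x y i) ^ (j : ℕ) * Lagrange.nodalWeight Finset.univ (Sum.elim x y) i
        = (S * X ^ (j : ℕ)).eval (Sum.elim x y i)
            * Lagrange.nodalWeight Finset.univ (Sum.elim x y) i := by
      intro i
      rw [hS, eval_mul, mul_div_cancel_left₀ _ (hQnode i), eval_mul, eval_pow, eval_X]
    simp only [hsum]
    by_cases hS0 : S = 0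
    · simp [hS0]
    · have hNc0 := natDegree_nodalFormNum_le (x := x) (y := y) c
      rw [hS, natDegree_mul hQm.ne_zero hS0, hQdeg] at hNc0
      have hd : (S * X ^ (j : ℕ)).natDegree ≤ 2 * δ - 2 := by
        rw [natDegree_mul hS0 (pow_ne_zero _ X_ne_zero), natDegree_pow, natDegree_X]
        omega
      rw [← coeff_card_sub_one_eq_sum_eval (Sum.elim x y) hdist _
        (degree_lt_of_natDegree_lt (by rw [hcard]; omega))]
      exact coeff_eq_zero_of_natDegree_lt (by rw [hcard]; omega)
  · intro H
    set g : Fin δ ⊕ Fin δ → ℂ := fun i =>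
      ((nodalFormNum δ x y) c).eval (Sum.elim x y i) / Q.eval (Sum.elim x y i) with hg
    set G := Lagrange.interpolate Finset.univ (Sum.elim x y) g with hG
    have hGeval : ∀ i, G.eval (Sum.elim x y i) = g i := fun i =>
      Lagrange.eval_interpolate_at_node g hdist.injOn (Finset.mem_univ i)
    have hsum0 : ∀ t : ℕ, t ≤ N → ∑ i : Fin δ ⊕ Fin δ,
        G.eval (Sum.elim x y i) * (Sum.elim x y i) ^ t
          * Lagrange.nodalWeight Finset.univ (Sum.elim x y) i = 0 := by
      intro t ht
      have hH := H ⟨t, by omega⟩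
      rw [show ((⟨t, by omega⟩ : Fin (N+1)) : ℕ) = t from rfl] at hH
      rw [bridge hdist hQnode c t] at hH
      have hs := neg_eq_zero.mp hH
      calc ∑ i : Fin δ ⊕ Fin δ, G.eval (Sum.elim x y i) * (Sum.elim x y i) ^ t
          * Lagrange.nodalWeight Finset.univ (Sum.elim x y) i
          = ∑ i : Fin δ ⊕ Fin δ, g i * (Sum.elim x y i) ^ t
          * Lagrange.nodalWeight Finset.univ (Sum.elim x y) i := by
            refine Finset.sum_congr rfl fun i _ => by rw [hGeval]
        _ = 0 := hs
    have hdesc : ∀ t : ℕ, t ≤ N + 1 → G.degree < ((2 * δ - t : ℕ) : WithBot ℕ) := by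
      intro t
      induction t with
      | zero =>
        intro _
        have h0 := Lagrange.degree_interpolate_lt (s := Finset.univ) (r := g) hdist.injOn
        rw [hucard] at h0
        simpa only [Nat.sub_zero] using h0
      | succ t ih =>
        intro ht1
        have hGt := ih (by omega)
        by_cases hG0 : G = 0
        · rw [hG0, degree_zero]; exact WithBot.bot_lt_coe _
        · have hGnat : G.natDegree < 2 * δ - t := (natDegree_lt_iff_degree_lt hG0).mpr hGt
          have ht2δ : t < 2 * δ := by omega
          have hcoeff : G.coeff (2 * δ - t - 1) = 0 := by
            have h0 : ∑ i : Fin δ ⊕ Fin δ, (G * X ^ t).eval (Sum.elim x y i)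
                * Lagrange.nodalWeight Finset.univ (Sum.elim x y) i = 0 := by
              have h1 := hsum0 t (by omega)
              simp only [eval_mul, eval_pow, eval_X]
              exact h1
            have hc := coeff_card_sub_one_eq_sum_eval (Sum.elim x y) hdist (G * X ^ t)
              (degree_lt_of_natDegree_lt (by
                rw [natDegree_mul hG0 (pow_ne_zero _ X_ne_zero), natDegree_pow, natDegree_X,
                  hcard]
                omega))
            rw [h0, hcard, coeff_mul_X_pow', if_pos (by omega)] at hc
            rw [show 2 * δ - t - 1 = 2 * δ - 1 - t from by omega]
            exact hc
          rw [degree_lt_iff_coeff_zero]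
          intro m hm
          have hm' : 2 * δ - (t + 1) ≤ m := by exact_mod_cast hm
          by_cases hmt : 2 * δ - t ≤ m
          · exact coeff_eq_zero_of_natDegree_lt (lt_of_lt_of_le hGnat hmt)
          · rw [show m = 2 * δ - t - 1 from by omega]
            exact hcoeff
    have hGfin := hdesc (N + 1) le_rfl
    have hNc : (nodalFormNum δ x y) c = G * Q := by
      have hdN : ((nodalFormNum δ x y) c).degree
          < (#(Finset.univ : Finset (Fin δ ⊕ Fin δ)) : WithBot ℕ) := by
        rw [hucard]
        refine degree_lt_of_natDegree_lt ?_
        have := natDegree_nodalFormNum_le (x := x) (y := y) c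
        omega
      have hdGQ : (G * Q).degree
          < (#(Finset.univ : Finset (Fin δ ⊕ Fin δ)) : WithBot ℕ) := by
        by_cases hG0 : G = 0
        · rw [hG0, zero_mul, degree_zero]; exact WithBot.bot_lt_coe _
        · have h1 : G.natDegree < 2 * δ - (N + 1) :=
            (natDegree_lt_iff_degree_lt hG0).mpr hGfin
          rw [hucard]
          refine degree_lt_of_natDegree_lt ?_
          rw [natDegree_mul hG0 hQm.ne_zero, hQdeg]
          omega
      refine Polynomial.eq_of_degrees_lt_of_eval_index_eq Finset.univ hdist.injOn hdN hdGQ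
        fun i _ => ?_
      rw [eval_mul, hGeval i, hg]
      exact (div_mul_cancel₀ _ (hQnode i)).symm
    exact ⟨G, by rw [hNc, mul_comm]⟩

end Aux

/-- The genus-zero Riemann–Roch theorem for the nodal rational curve `Σ` obtained from
`ℙ¹` by identifying `x k` with `y k` (`k = 1, …, δ`): for the effective divisor
`D = ∑ m i [q i]` of degree `N = ∑ m i` supported away from the nodes, with
`Q = ∏ (z − q i)^(m i)`, one has `dim V_D = N + 1 − δ + dim Ω_{−D}` (stated without
truncated subtraction as `dim V_D + δ = N + 1 + dim Ω_{−D}`). -/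
theorem riemann_roch_nodal_rational
    (δ s : ℕ) (hδ : 1 ≤ δ)
    (x y : Fin δ → ℂ)
    (hdist : Function.Injective (Sum.elim x y : Fin δ ⊕ Fin δ → ℂ))
    (q : Fin s → ℂ) (hq : Function.Injective q)
    (hqxy : ∀ i k, q i ≠ x k ∧ q i ≠ y k)
    (m : Fin s → ℕ) (hm : ∀ i, 0 < m i)
    (N : ℕ) (hN : N = ∑ i, m i)
    (Q : Polynomial ℂ) (hQ : Q = ∏ i, (X - C (q i)) ^ m i) :
    Module.finrank ℂ (VD N δ x y Q) + δ =
      N + 1 + Module.finrank ℂ (OmegaD δ x y Q) := by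
  classical
  have hQm : Q.Monic := by
    rw [hQ]; exact monic_prod_of_monic _ _ fun i _ => (monic_X_sub_C _).pow _
  have hQdeg : Q.natDegree = N := by
    rw [hQ, natDegree_prod _ _ fun i _ => ((monic_X_sub_C (q i)).pow _).ne_zero]
    simp only [natDegree_pow, natDegree_X_sub_C, mul_one]
    omega
  have hQx : ∀ k, Q.eval (x k) ≠ 0 := by
    intro k
    rw [hQ, eval_prod]
    exact Finset.prod_ne_zero_iff.2 fun i _ => by
      rw [eval_pow, eval_sub, eval_X, eval_C]
      exact pow_ne_zero _ (sub_ne_zero.2 (Ne.symm (hqxy i k).1))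
  have hQy : ∀ k, Q.eval (y k) ≠ 0 := by
    intro k
    rw [hQ, eval_prod]
    exact Finset.prod_ne_zero_iff.2 fun i _ => by
      rw [eval_pow, eval_sub, eval_X, eval_C]
      exact pow_ne_zero _ (sub_ne_zero.2 (Ne.symm (hqxy i k).2))
  set A : Matrix (Fin δ) (Fin (N+1)) ℂ :=
    Matrix.of (fun k j => Q.eval (y k) * x k ^ (j : ℕ) - Q.eval (x k) * y k ^ (j : ℕ))
    with hA
  -- The V_D side
  have hVD : Module.finrank ℂ (VD N δ x y Q) + A.rank = N + 1 := by
    set ℓ : (degreeLT ℂ (N+1) : Submodule ℂ (Polynomial ℂ)) →ₗ[ℂ] (Fin δ → ℂ) :=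
      A.mulVecLin ∘ₗ (Polynomial.degreeLTEquiv ℂ (N+1)).toLinearMap with hℓ
    have hval : ∀ (P : Polynomial ℂ) (hP : P ∈ degreeLT ℂ (N+1)) (k : Fin δ),
        ℓ ⟨P, hP⟩ k = Q.eval (y k) * eval (x k) P - Q.eval (x k) * eval (y k) P := by
      intro P hP k
      simp only [hℓ, LinearMap.comp_apply, LinearEquiv.coe_coe,
        Matrix.mulVecLin_apply, Matrix.mulVec, dotProduct]
      rw [Polynomial.eval_eq_sum_degreeLTEquiv hP (x k),
        Polynomial.eval_eq_sum_degreeLTEquiv hP (y k),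
        Finset.mul_sum, Finset.mul_sum, ← Finset.sum_sub_distrib]
      refine Finset.sum_congr rfl fun j _ => ?_
      rw [hA]
      show (Q.eval (y k) * x k ^ (j : ℕ) - Q.eval (x k) * y k ^ (j : ℕ)) * _ = _
      ring
    have hkerℓ : LinearMap.ker ℓ = Submodule.comap (degreeLT ℂ (N+1)).subtype
        (⨅ k : Fin δ, LinearMap.ker
          (Q.eval (y k) • Polynomial.leval (x k) - Q.eval (x k) • Polynomial.leval (y k))) := by
      ext ⟨P, hP⟩
      simp only [LinearMap.mem_ker, Submodule.mem_comap, Submodule.mem_iInf, LinearMap.mem_ker,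
        Submodule.coe_subtype, LinearMap.sub_apply, LinearMap.smul_apply, Polynomial.leval_apply,
        smul_eq_mul, funext_iff, Pi.zero_apply]
      refine forall_congr' fun k => ?_
      rw [hval P hP k]
    have hVDmap : VD N δ x y Q
        = Submodule.map (degreeLT ℂ (N+1)).subtype (LinearMap.ker ℓ) := by
      rw [hkerℓ, Submodule.map_comap_subtype]
      rw [show VD N δ x y Q = Polynomial.degreeLE ℂ (N : WithBot ℕ) ⊓
        ⨅ k : Fin δ, LinearMap.ker
          (Q.eval (y k) • Polynomial.leval (x k) - Q.eval (x k) • Polynomial.leval (y k))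
        from rfl, ← Polynomial.degreeLT_succ_eq_degreeLE]
    have h1 : Module.finrank ℂ (VD N δ x y Q) = Module.finrank ℂ (LinearMap.ker ℓ) := by
      rw [hVDmap]
      exact (LinearEquiv.finrank_eq
        (Submodule.equivMapOfInjective _ (Submodule.injective_subtype _) _)).symm
    have h2 : LinearMap.ker ℓ = Submodule.comap
        ((Polynomial.degreeLTEquiv ℂ (N+1) : _ ≃ₗ[ℂ] _) : _ →ₗ[ℂ] _)
        (LinearMap.ker A.mulVecLin) := LinearMap.ker_comp _ _
    have h3 : Module.finrank ℂ (LinearMap.ker ℓ)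
        = Module.finrank ℂ (LinearMap.ker A.mulVecLin) := by
      rw [h2, Submodule.comap_equiv_eq_map_symm, LinearEquiv.finrank_map_eq]
    have h4 := LinearMap.finrank_range_add_finrank_ker A.mulVecLin
    rw [Module.finrank_fin_fun] at h4
    have h5 : A.rank = Module.finrank ℂ (LinearMap.range A.mulVecLin) := rfl
    rw [h1, h3]
    omega
  -- The Ω_{-D} side
  have hOm : Module.finrank ℂ (OmegaD δ x y Q) + A.rank = δ := by
    set d : Fin δ → ℂ := fun k => (Q.eval (x k) * Q.eval (y k))⁻¹ with hd
    have hdne : ∀ k, d k ≠ 0 := fun k => inv_ne_zero (mul_ne_zero (hQx k) (hQy k))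
    set e : (Fin δ → ℂ) ≃ₗ[ℂ] (Fin δ → ℂ) := LinearEquiv.ofLinear
      (LinearMap.pi fun k => d k • LinearMap.proj k)
      (LinearMap.pi fun k => (d k)⁻¹ • LinearMap.proj k)
      (LinearMap.ext fun v => funext fun k => by
        simp only [LinearMap.comp_apply, LinearMap.pi_apply, LinearMap.smul_apply,
          LinearMap.proj_apply, smul_eq_mul, LinearMap.id_apply]
        rw [← mul_assoc, mul_inv_cancel₀ (hdne k), one_mul])
      (LinearMap.ext fun v => funext fun k => by
        simp only [LinearMap.comp_apply, LinearMap.pi_apply, LinearMap.smul_apply,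
          LinearMap.proj_apply, smul_eq_mul, LinearMap.id_apply]
        rw [← mul_assoc, inv_mul_cancel₀ (hdne k), one_mul]) with he
    have hOmEq : OmegaD δ x y Q
        = Submodule.comap (e : (Fin δ → ℂ) →ₗ[ℂ] (Fin δ → ℂ))
            (LinearMap.ker A.transpose.mulVecLin) := by
      ext c
      simp only [OmegaD, Submodule.mem_comap, Submodule.restrictScalars_mem,
        Ideal.mem_span_singleton, LinearMap.mem_ker]
      rw [key_dvd_iff hδ hdist hQm hQdeg hQx hQy c, funext_iff]
      refine forall_congr' fun j => ?_
      have hAv : (A.transpose.mulVecLin ((e : (Fin δ → ℂ) →ₗ[ℂ] (Fin δ → ℂ)) c)) j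
          = ∑ k, (Q.eval (y k) * x k ^ (j : ℕ) - Q.eval (x k) * y k ^ (j : ℕ))
              * (d k * c k) := by
        simp only [Matrix.mulVecLin_apply, Matrix.mulVec, dotProduct,
          Matrix.transpose_apply, he, LinearEquiv.ofLinear_apply, LinearMap.pi_apply,
          LinearMap.smul_apply, LinearMap.proj_apply, smul_eq_mul, hA, Matrix.of_apply,
          LinearEquiv.coe_coe]
      rw [hAv, Pi.zero_apply]
      rw [show ∑ k, (Q.eval (x k) * Q.eval (y k))⁻¹ * c k *
            (Q.eval (y k) * x k ^ (j : ℕ) - Q.eval (x k) * y k ^ (j : ℕ))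
          = ∑ k, (Q.eval (y k) * x k ^ (j : ℕ) - Q.eval (x k) * y k ^ (j : ℕ))
              * (d k * c k) from Finset.sum_congr rfl fun k _ => by rw [hd]; ring]
    rw [hOmEq, Submodule.comap_equiv_eq_map_symm, LinearEquiv.finrank_map_eq]
    have h4 := LinearMap.finrank_range_add_finrank_ker (A.transpose).mulVecLin
    rw [Module.finrank_fin_fun] at h4
    have h5 : A.transpose.rank = Module.finrank ℂ (LinearMap.range A.transpose.mulVecLin) := rfl
    have h6 := Matrix.rank_transpose A
    omega
  omega
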